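/- Let G be a finite simple graph on an even number n of vertices with a perfect matching M, and suppose the minimum degree δ of G satisfies δ ≥ 3 and δ ≥ n/2. Then OPT(G) ≤ ALG(G, M) + 1. -/

import Mathlib

open SimpleGraph

/-- `C` is an edge 2-coloring of `G`: for every vertex, the edges incident to it
carry at most 2 distinct colors. -/
def IsEdge2Coloring {V : Type*} (G : SimpleGraph V) (C : Sym2 V → ℕ) : Prop :=
  ∀ v : V, (C '' G.incidenceSet v).ncard ≤ 2

/-- The number of distinct colors used by a coloring `C` on the edges of `G`. -/
noncomputable def numColors {V : Type*} (G : SimpleGraph V) (C : Sym2 V → ℕ) : ℕ :=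
  (C '' G.edgeSet).ncard

/-- `OPT G`: the maximum number of colors used by an edge 2-coloring of `G`. -/
noncomputable def OPT {V : Type*} (G : SimpleGraph V) : ℕ :=
  sSup {n : ℕ | ∃ C : Sym2 V → ℕ, IsEdge2Coloring G C ∧ numColors G C = n}

/-- `M` is a matching of `G`, given as a set of edges: the edges belong to `G` and
are pairwise vertex-disjoint. -/
def IsMatchingSet {V : Type*} (G : SimpleGraph V) (M : Set (Sym2 V)) : Prop :=
  M ⊆ G.edgeSet ∧ ∀ e ∈ M, ∀ f ∈ M, e ≠ f → ∀ v : V, v ∈ e → v ∉ f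

/-- `ALG G M`: number of colors produced by the matching based algorithm, i.e.
`|M|` plus the number of connected components of `G − M`. -/
noncomputable def ALG {V : Type*} (G : SimpleGraph V) (M : Set (Sym2 V)) : ℕ :=
  M.ncard + Nat.card (G.deleteEdges M).ConnectedComponent

/-- `H` is a characteristic subgraph of `G` with respect to the coloring `C`:
a subgraph of `G` containing exactly one edge of each color used by `C`. -/
def IsCharSubgraph {V : Type*} (G : SimpleGraph V) (C : Sym2 V → ℕ)
    (H : SimpleGraph V) : Prop :=
  H ≤ G ∧ ∀ c ∈ C '' G.edgeSet, ∃! e, e ∈ H.edgeSet ∧ C e = c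



private noncomputable def fibcard {V : Type*} [Fintype V] (col : V → Finset ℕ) (c : ℕ) : ℕ :=
  (Finset.univ.filter (fun u => c ∈ col u)).card

open Finset in
private lemma double_count' {V : Type*} [Fintype V] (A : Finset ℕ) (col : V → Finset ℕ) :
    ∑ c ∈ A, fibcard col c = ∑ u : V, ((col u) ∩ A).card := by
  classical
  calc ∑ c ∈ A, fibcard col c
      = ∑ c ∈ A, ∑ u : V, (if c ∈ col u then 1 else 0) := by
        simp only [fibcard, Finset.card_filter]
    _ = ∑ u : V, ∑ c ∈ A, (if c ∈ col u then 1 else 0) := Finset.sum_comm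
    _ = ∑ u : V, ((A.filter (fun c => c ∈ col u)).card) := by simp only [Finset.card_filter]
    _ = _ := by
        refine Finset.sum_congr rfl fun u _ => ?_
        rw [Finset.filter_mem_eq_inter, Finset.inter_comm]

private lemma abstract_bound {V : Type*} [Fintype V] (D : ℕ) (hD : 4 ≤ D)
    (hcard : Fintype.card V + 4 = 2 * D)
    (K : Finset ℕ) (col : V → Finset ℕ)
    (hsub : ∀ u, col u ⊆ K)
    (hone : ∀ u, (col u).Nonempty)
    (htwo : ∀ u, (col u).card ≤ 2)
    (hs2 : ∀ c ∈ K, 2 ≤ fibcard col c)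
    (h5 : ∀ u : V, D + (col u).card ≤ (∑ c ∈ col u, fibcard col c) + 2) :
    K.card ≤ D := by
  classical
  set n := Fintype.card V with hn
  -- total incidences
  have htot : ∑ c ∈ K, fibcard col c ≤ 2 * n := by
    rw [double_count' K col]
    calc ∑ u : V, ((col u) ∩ K).card = ∑ u : V, (col u).card := by
          refine Finset.sum_congr rfl fun u _ => ?_
          rw [Finset.inter_eq_left.2 (hsub u)]
      _ ≤ ∑ _u : V, 2 := Finset.sum_le_sum fun u _ => htwo u
      _ = 2 * n := by simp [hn, mul_comm]
  -- per-token structure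
  have hcase : ∀ u : V, (∃ a, col u = {a} ∧ D ≤ fibcard col a + 1) ∨
      (∃ a b, a ≠ b ∧ col u = {a, b} ∧ D ≤ fibcard col a + fibcard col b) := by
    intro u
    have h1 : 1 ≤ (col u).card := Finset.card_pos.2 (hone u)
    have h2 := htwo u
    have h5u := h5 u
    have : (col u).card = 1 ∨ (col u).card = 2 := by omega
    rcases this with h | h
    · obtain ⟨a, ha⟩ := Finset.card_eq_one.1 h
      rw [ha, Finset.sum_singleton, Finset.card_singleton] at h5u
      exact Or.inl ⟨a, ha, by omega⟩
    · obtain ⟨a, b, hab, hcol⟩ := Finset.card_eq_two.1 h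
      rw [hcol, Finset.sum_pair hab, Finset.card_pair hab] at h5u
      exact Or.inr ⟨a, b, hab, hcol, by omega⟩
  have hbigex : ∀ u : V, ∃ c ∈ col u, D ≤ 2 * fibcard col c := by
    intro u
    rcases hcase u with ⟨a, ha, h⟩ | ⟨a, b, hab, hcol, h⟩
    · exact ⟨a, by simp [ha], by omega⟩
    · by_contra hcon
      push_neg at hcon
      have h1 := hcon a (by simp [hcol])
      have h2 := hcon b (by simp [hcol])
      omega
  set Big := K.filter (fun c => D ≤ 2 * fibcard col c) with hBigdef
  set b := Big.card with hb
  set σ := ∑ c ∈ Big, fibcard col c with hσ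
  have hfmem : ∀ u : V, ∃ c, c ∈ Big ∧ c ∈ col u := by
    intro u
    obtain ⟨c, hc, hcb⟩ := hbigex u
    exact ⟨c, Finset.mem_filter.2 ⟨hsub u hc, hcb⟩, hc⟩
  have hσn : n ≤ σ := by
    choose f hf1 hf2 using hfmem
    have hfib := Finset.card_eq_sum_card_fiberwise
      (f := f) (s := Finset.univ) (t := Big) (fun u _ => hf1 u)
    calc n = ∑ c ∈ Big, (Finset.univ.filter (fun u => f u = c)).card := by
          rw [← hfib, hn, Finset.card_univ]
      _ ≤ ∑ c ∈ Big, fibcard col c := by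
          refine Finset.sum_le_sum fun c hc => Finset.card_le_card ?_
          intro u hu
          simp only [Finset.mem_filter, Finset.mem_univ, true_and] at hu ⊢
          rw [← hu]; exact hf2 u
  set Ksmall := K.filter (fun c => ¬ D ≤ 2 * fibcard col c) with hKs
  set ksmall := Ksmall.card with hksmall
  have hsplit : σ + ∑ c ∈ Ksmall, fibcard col c = ∑ c ∈ K, fibcard col c :=
    Finset.sum_filter_add_sum_filter_not K _ _
  have hksum : b + ksmall = K.card :=
    Finset.card_filter_add_card_filter_not _
  have hsmall2 : 2 * ksmall ≤ ∑ c ∈ Ksmall, fibcard col c := by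
    have := Finset.card_nsmul_le_sum Ksmall (fibcard col) 2
      (fun c hc => hs2 c (Finset.mem_filter.1 hc).1)
    simpa [mul_comm] using this
  have hlin : 2 * ksmall + σ ≤ 2 * n := by omega
  by_cases hb4 : 4 ≤ b
  · have hbD : b * D ≤ 2 * σ := by
      calc b * D = ∑ _c ∈ Big, D := by rw [Finset.sum_const, smul_eq_mul]
        _ ≤ ∑ c ∈ Big, 2 * fibcard col c :=
            Finset.sum_le_sum fun c hc => (Finset.mem_filter.1 hc).2
        _ = 2 * σ := by rw [hσ, Finset.mul_sum]
    have hineq : 4 * b + 4 * D ≤ b * D + 16 := by nlinarith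
    have hfin : 4 * b + 4 * D ≤ 2 * σ + 16 := le_trans hineq (by omega)
    omega
  · by_cases hb3 : b = 3
    · by_cases hσ2 : n + 2 ≤ σ
      · omega
      · have hBigne : Big.Nonempty := Finset.card_pos.1 (by omega)
        obtain ⟨c0, hc0, hc0max⟩ := Finset.exists_max_image Big (fibcard col) hBigne
        have hp2 : 2 ≤ fibcard col c0 := hs2 c0 (Finset.mem_filter.1 hc0).1
        have herase : fibcard col c0 + ∑ c ∈ Big.erase c0, fibcard col c = σ :=
          Finset.add_sum_erase _ _ hc0
        have hercard : (Big.erase c0).card = 2 := by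
          rw [Finset.card_erase_of_mem hc0]; omega
        have hqr : D ≤ ∑ c ∈ Big.erase c0, fibcard col c := by
          have h1 : ∑ _c ∈ Big.erase c0, D ≤ ∑ c ∈ Big.erase c0, 2 * fibcard col c :=
            Finset.sum_le_sum fun c hc =>
              (Finset.mem_filter.1 (Finset.mem_of_mem_erase hc)).2
          rw [Finset.sum_const, smul_eq_mul, hercard, ← Finset.mul_sum] at h1
          omega
        have hpD : fibcard col c0 + 3 ≤ D := by omega
        have hsmalllb : ∀ c ∈ Ksmall, D ≤ fibcard col c + fibcard col c0 := by
          intro c hc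
          have hcK := (Finset.mem_filter.1 hc).1
          have hcs : ¬ D ≤ 2 * fibcard col c := (Finset.mem_filter.1 hc).2
          have h2c : 2 ≤ fibcard col c := hs2 c hcK
          have hne : (Finset.univ.filter (fun u => c ∈ col u)).Nonempty := by
            apply Finset.card_pos.1
            have : fibcard col c = (Finset.univ.filter (fun u => c ∈ col u)).card := rfl
            omega
          obtain ⟨u, hu⟩ := hne
          have hcu : c ∈ col u := (Finset.mem_filter.1 hu).2
          rcases hcase u with ⟨a, ha, hD1⟩ | ⟨a, b', hab, hcol, hDs⟩
          · have hca : c = a := by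
              rw [ha] at hcu; exact Finset.mem_singleton.1 hcu
            rw [← hca] at hD1; omega
          · have hcab : c = a ∨ c = b' := by
              rw [hcol] at hcu; simpa using hcu
            rcases hcab with rfl | rfl
            · by_cases hbig' : D ≤ 2 * fibcard col b'
              · have hle : fibcard col b' ≤ fibcard col c0 :=
                  hc0max b' (Finset.mem_filter.2
                    ⟨hsub u (by rw [hcol]; simp), hbig'⟩)
                omega
              · omega
            · by_cases hbig' : D ≤ 2 * fibcard col a
              · have hle : fibcard col a ≤ fibcard col c0 :=
                  hc0max a (Finset.mem_filter.2
                    ⟨hsub u (by rw [hcol]; simp), hbig'⟩)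
                omega
              · omega
        have honesmall : ∀ u : V, ((col u) ∩ Ksmall).card ≤ 1 := by
          intro u
          refine Finset.card_le_one.2 fun a ha b' hb' => ?_
          by_contra hab
          have ha1 : a ∈ col u := (Finset.mem_inter.1 ha).1
          have hb1 : b' ∈ col u := (Finset.mem_inter.1 hb').1
          have hsa : ¬ D ≤ 2 * fibcard col a :=
            (Finset.mem_filter.1 (Finset.mem_inter.1 ha).2).2
          have hsb : ¬ D ≤ 2 * fibcard col b' :=
            (Finset.mem_filter.1 (Finset.mem_inter.1 hb').2).2
          have hsubp : ({a, b'} : Finset ℕ) ⊆ col u := by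
            intro x hx
            rcases Finset.mem_insert.1 hx with rfl | hx
            · exact ha1
            · rw [Finset.mem_singleton.1 hx]; exact hb1
          have hcolu : col u = {a, b'} :=
            (Finset.eq_of_subset_of_card_le hsubp
              (le_trans (htwo u) (by rw [Finset.card_pair hab]))).symm
          have h5u := h5 u
          rw [hcolu, Finset.sum_pair hab, Finset.card_pair hab] at h5u
          omega
        have hsmallub : ∑ c ∈ Ksmall, fibcard col c ≤ n := by
          rw [double_count' Ksmall col]
          calc ∑ u : V, ((col u) ∩ Ksmall).card ≤ ∑ _u : V, 1 :=
                Finset.sum_le_sum fun u _ => honesmall u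
            _ = n := by simp [hn]
        have hsmalllb2 : ksmall * (D - fibcard col c0) ≤ ∑ c ∈ Ksmall, fibcard col c := by
          have := Finset.card_nsmul_le_sum Ksmall (fibcard col) (D - fibcard col c0)
            (fun c hc => by have := hsmalllb c hc; omega)
          simpa [smul_eq_mul] using this
        have h3k : 3 * ksmall ≤ ksmall * (D - fibcard col c0) := by
          have h3 : 3 ≤ D - fibcard col c0 := by omega
          calc 3 * ksmall = ksmall * 3 := mul_comm _ _
            _ ≤ ksmall * (D - fibcard col c0) := Nat.mul_le_mul_left _ h3
        have hfin : 3 * ksmall ≤ n := le_trans h3k (le_trans hsmalllb2 hsmallub)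
        omega
    · omega

private lemma numColors_le_main {V : Type*} [Fintype V] [Nonempty V] (G : SimpleGraph V)
    (hn : Even (Fintype.card V)) (δ : ℕ) (hδ3 : 3 ≤ δ)
    (hδhalf : Fintype.card V / 2 ≤ δ) (hδ : ∀ v : V, δ ≤ (G.neighborSet v).ncard)
    (C : Sym2 V → ℕ) (hC : IsEdge2Coloring G C) :
    numColors G C ≤ Fintype.card V / 2 + 2 := by
  classical
  set n := Fintype.card V with hndef
  have hKfin : (C '' G.edgeSet).Finite := (Set.toFinite _).image C
  have hcolfin : ∀ u : V, (C '' G.incidenceSet u).Finite :=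
    fun u => (Set.toFinite _).image C
  set col : V → Finset ℕ := fun u => (hcolfin u).toFinset with hcoldef
  set K : Finset ℕ := hKfin.toFinset with hKdef
  have hmemcol : ∀ u c, c ∈ col u ↔ c ∈ C '' G.incidenceSet u :=
    fun u c => (hcolfin u).mem_toFinset
  have hmemK : ∀ c, c ∈ K ↔ c ∈ C '' G.edgeSet := fun c => hKfin.mem_toFinset
  -- neighbor finsets
  have hnbrfin : ∀ u : V, (G.neighborSet u).Finite := fun u => Set.toFinite _
  have hdeg : ∀ u : V, n / 2 ≤ ((hnbrfin u).toFinset).card := by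
    intro u
    have h1 := hδ u
    rw [Set.ncard_eq_toFinset_card _ (hnbrfin u)] at h1
    exact le_trans hδhalf h1
  have hdeg3 : ∀ u : V, 3 ≤ ((hnbrfin u).toFinset).card := by
    intro u
    have h1 := hδ u
    rw [Set.ncard_eq_toFinset_card _ (hnbrfin u)] at h1
    exact le_trans hδ3 h1
  have hnotmem : ∀ u : V, u ∉ (hnbrfin u).toFinset := by
    intro u hu
    rw [Set.Finite.mem_toFinset] at hu
    exact G.irrefl hu
  -- n ≥ 4
  have hn4 : 4 ≤ n := by
    obtain ⟨v⟩ := ‹Nonempty V›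
    have h1 : insert v ((hnbrfin v).toFinset) ⊆ Finset.univ := Finset.subset_univ _
    have h2 := Finset.card_le_card h1
    rw [Finset.card_insert_of_notMem (hnotmem v), Finset.card_univ] at h2
    have := hdeg3 v
    omega
  obtain ⟨m, hm⟩ := hn
  have hcard2 : n + 4 = 2 * (n / 2 + 2) := by omega
  have hgoal : K.card ≤ n / 2 + 2 := by
    apply abstract_bound (n / 2 + 2) (by omega) hcard2 K col
    · -- hsub
      intro u c hc
      rw [hmemcol] at hc
      rw [hmemK]
      exact Set.image_mono (G.incidenceSet_subset u) hc
    · -- hone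
      intro u
      have hne : (G.neighborSet u).Nonempty :=
        Set.nonempty_of_ncard_ne_zero (by have := hδ u; omega)
      obtain ⟨v, hv⟩ := hne
      have hadj : G.Adj u v := hv
      refine ⟨C s(u,v), ?_⟩
      rw [hmemcol]
      exact ⟨s(u,v), G.mk'_mem_incidenceSet_left_iff.mpr hadj, rfl⟩
    · -- htwo
      intro u
      have := hC u
      rwa [Set.ncard_eq_toFinset_card _ (hcolfin u)] at this
    · -- hs2
      intro c hc
      rw [hmemK] at hc
      obtain ⟨e, heE, hce⟩ := hc
      obtain ⟨⟨x, y⟩, rfl⟩ := Quot.exists_rep e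
      have hadj : G.Adj x y := G.mem_edgeSet.1 heE
      have hxy : x ≠ y := hadj.ne
      have hx : c ∈ col x := by
        rw [hmemcol]
        exact ⟨s(x,y), G.mk'_mem_incidenceSet_left_iff.mpr hadj, hce⟩
      have hy : c ∈ col y := by
        rw [hmemcol]
        exact ⟨s(x,y), G.mk'_mem_incidenceSet_right_iff.mpr hadj, hce⟩
      show 2 ≤ (Finset.univ.filter (fun u => c ∈ col u)).card
      have hsub2 : ({x, y} : Finset V) ⊆ Finset.univ.filter (fun u => c ∈ col u) := by
        intro z hz
        rcases Finset.mem_insert.1 hz with rfl | hz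
        · exact Finset.mem_filter.2 ⟨Finset.mem_univ _, hx⟩
        · rw [Finset.mem_singleton.1 hz]
          exact Finset.mem_filter.2 ⟨Finset.mem_univ _, hy⟩
      calc 2 = ({x, y} : Finset V).card := (Finset.card_pair hxy).symm
        _ ≤ _ := Finset.card_le_card hsub2
    · -- h5
      intro u
      have hdu := hdeg u
      have hcolcard : (col u).card ≤ 2 := by
        have := hC u
        rwa [Set.ncard_eq_toFinset_card _ (hcolfin u)] at this
      have hkey : ((hnbrfin u).toFinset).card + (col u).card ≤
          ∑ c ∈ col u, fibcard col c := by
        have honeu : (col u).Nonempty := by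
          have h3 := hdeg3 u
          rcases Finset.card_pos.1 (show 0 < ((hnbrfin u).toFinset).card by omega) with ⟨v, hv⟩
          rw [Set.Finite.mem_toFinset] at hv
          refine ⟨C s(u,v), ?_⟩
          rw [hmemcol]
          exact ⟨s(u,v), G.mk'_mem_incidenceSet_left_iff.mpr hv, rfl⟩
        have h12 : (col u).card = 1 ∨ (col u).card = 2 := by
          have := Finset.card_pos.2 honeu; omega
        have hedgecol : ∀ v ∈ (hnbrfin u).toFinset, C s(u,v) ∈ col u ∧
            (∀ d, C s(u,v) = d → d ∈ col v) := by
          intro v hv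
          rw [Set.Finite.mem_toFinset] at hv
          have hadj : G.Adj u v := hv
          constructor
          · rw [hmemcol]
            exact ⟨s(u,v), G.mk'_mem_incidenceSet_left_iff.mpr hadj, rfl⟩
          · intro d hd
            rw [hmemcol]
            exact ⟨s(u,v), G.mk'_mem_incidenceSet_right_iff.mpr hadj, hd⟩
        rcases h12 with h1 | h2
        · obtain ⟨a, ha⟩ := Finset.card_eq_one.1 h1
          rw [ha, Finset.sum_singleton, Finset.card_singleton]
          have hsubN : insert u ((hnbrfin u).toFinset) ⊆
              Finset.univ.filter (fun w => a ∈ col w) := by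
            intro w hw
            refine Finset.mem_filter.2 ⟨Finset.mem_univ _, ?_⟩
            rcases Finset.mem_insert.1 hw with rfl | hw
            · rw [ha]; exact Finset.mem_singleton_self a
            · obtain ⟨hmem, himp⟩ := hedgecol w hw
              rw [ha] at hmem
              exact himp a (Finset.mem_singleton.1 hmem)
          have hcardins := Finset.card_insert_of_notMem (hnotmem u)
          have hle := Finset.card_le_card hsubN
          rw [hcardins] at hle
          exact hle
        · obtain ⟨a, b, hab, hcol2⟩ := Finset.card_eq_two.1 h2
          rw [hcol2, Finset.sum_pair hab, Finset.card_pair hab]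
          set A := Finset.univ.filter (fun w => a ∈ col w) with hA
          set B := Finset.univ.filter (fun w => b ∈ col w) with hB
          have hsubN : insert u ((hnbrfin u).toFinset) ⊆ A ∪ B := by
            intro w hw
            rcases Finset.mem_insert.1 hw with rfl | hw
            · refine Finset.mem_union_left _ (Finset.mem_filter.2 ⟨Finset.mem_univ _, ?_⟩)
              rw [hcol2]; exact Finset.mem_insert_self a _
            · obtain ⟨hmem, himp⟩ := hedgecol w hw
              rw [hcol2] at hmem
              rcases Finset.mem_insert.1 hmem with hc | hc
              · exact Finset.mem_union_left _
                  (Finset.mem_filter.2 ⟨Finset.mem_univ _, himp a hc⟩)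
              · exact Finset.mem_union_right _
                  (Finset.mem_filter.2 ⟨Finset.mem_univ _,
                    himp b (Finset.mem_singleton.1 hc)⟩)
          have huAB : u ∈ A ∩ B := by
            refine Finset.mem_inter.2 ⟨Finset.mem_filter.2 ⟨Finset.mem_univ _, ?_⟩,
              Finset.mem_filter.2 ⟨Finset.mem_univ _, ?_⟩⟩
            · rw [hcol2]; exact Finset.mem_insert_self a _
            · rw [hcol2]; exact Finset.mem_insert.2 (Or.inr (Finset.mem_singleton_self b))
          have h1 : ((hnbrfin u).toFinset).card + 1 ≤ (A ∪ B).card := by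
            have hle := Finset.card_le_card hsubN
            rwa [Finset.card_insert_of_notMem (hnotmem u)] at hle
          have h2' : 1 ≤ (A ∩ B).card := Finset.card_pos.2 ⟨u, huAB⟩
          have h3 : (A ∪ B).card + (A ∩ B).card = A.card + B.card :=
            Finset.card_union_add_card_inter A B
          show ((hnbrfin u).toFinset).card + 2 ≤ A.card + B.card
          omega
      show n / 2 + 2 + (col u).card ≤ (∑ c ∈ col u, fibcard col c) + 2
      omega
  have : numColors G C = K.card := by
    rw [numColors, Set.ncard_eq_toFinset_card _ hKfin]
  omega

private lemma matching_card {V : Type*} [Fintype V] (G : SimpleGraph V) (M : Set (Sym2 V))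
    (hM : IsMatchingSet G M) (hMperf : ∀ v : V, ∃ e ∈ M, v ∈ e) :
    2 * M.ncard = Fintype.card V := by
  classical
  have hMfin : M.Finite := Set.toFinite M
  choose φ hφM hφmem using hMperf
  have huniq : ∀ v : V, ∀ e ∈ M, v ∈ e → e = φ v := by
    intro v e he hv
    by_contra hne
    exact hM.2 e he (φ v) (hφM v) hne v hv (hφmem v)
  have hmap : ∀ v : V, v ∈ Finset.univ → φ v ∈ hMfin.toFinset :=
    fun v _ => hMfin.mem_toFinset.2 (hφM v)
  have hcount := Finset.card_eq_sum_card_fiberwise hmap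
  have hfib : ∀ e ∈ hMfin.toFinset,
      (Finset.univ.filter (fun v => φ v = e)).card = 2 := by
    intro e he
    have heM : e ∈ M := hMfin.mem_toFinset.1 he
    have heE : e ∈ G.edgeSet := hM.1 heM
    obtain ⟨⟨x, y⟩, rfl⟩ := Quot.exists_rep e
    have hadj : G.Adj x y := G.mem_edgeSet.1 heE
    have hxy : x ≠ y := hadj.ne
    have hset : Finset.univ.filter (fun v => φ v = s(x,y)) = {x, y} := by
      ext v
      simp only [Finset.mem_filter, Finset.mem_univ, true_and, Finset.mem_insert,
        Finset.mem_singleton]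
      constructor
      · intro h
        have hv : v ∈ φ v := hφmem v
        rw [h] at hv
        simpa [Sym2.mem_iff] using hv
      · intro h
        have hv : v ∈ s(x,y) := by rcases h with rfl | rfl <;> simp
        exact (huniq v s(x,y) heM hv).symm
    rw [hset, Finset.card_pair hxy]
  rw [Finset.sum_congr rfl hfib, Finset.sum_const, smul_eq_mul, mul_comm] at hcount
  rw [Set.ncard_eq_toFinset_card _ hMfin]
  rw [Finset.card_univ] at hcount
  omega

/-- For a graph on an even number `n` of vertices with a perfect matching `M` and
minimum degree `δ ≥ 3` with `δ ≥ n/2`, we have `OPT(G) ≤ ALG(G, M) + 1`. -/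
theorem opt_le_alg_add_one {V : Type*} [Fintype V] (G : SimpleGraph V)
    (hn : Even (Fintype.card V)) (δ : ℕ)
    (hδ3 : 3 ≤ δ) (hδhalf : Fintype.card V / 2 ≤ δ)
    (hδ : ∀ v : V, δ ≤ (G.neighborSet v).ncard)
    (M : Set (Sym2 V)) (hM : IsMatchingSet G M) (hMperf : ∀ v : V, ∃ e ∈ M, v ∈ e) :
    OPT G ≤ ALG G M + 1 := by
  classical
  have hconst : IsEdge2Coloring G (fun _ => 0) := by
    intro v
    have hsub : (fun _ => (0:ℕ)) '' G.incidenceSet v ⊆ {0} := by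
      rintro c ⟨e, _, rfl⟩; rfl
    calc ((fun _ => (0:ℕ)) '' G.incidenceSet v).ncard
        ≤ ({0} : Set ℕ).ncard := Set.ncard_le_ncard hsub (Set.finite_singleton 0)
      _ ≤ 2 := by rw [Set.ncard_singleton]; omega
  unfold OPT
  refine csSup_le ⟨numColors G (fun _ => 0), ⟨fun _ => 0, hconst, rfl⟩⟩ ?_
  rintro k ⟨C, hC, rfl⟩
  rcases isEmpty_or_nonempty V with hemp | hne
  · have hE : G.edgeSet = ∅ := by
      ext e
      simp only [Set.mem_empty_iff_false, iff_false]
      intro he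
      obtain ⟨⟨x, y⟩, rfl⟩ := Quot.exists_rep e
      exact hemp.elim x
    have : numColors G C = 0 := by
      rw [numColors, hE, Set.image_empty, Set.ncard_empty]
    omega
  · have hbound := numColors_le_main G hn δ hδ3 hδhalf hδ C hC
    have hmc := matching_card G M hM hMperf
    have hcomp : 1 ≤ Nat.card (G.deleteEdges M).ConnectedComponent := by
      have hfin : Finite ((G.deleteEdges M).ConnectedComponent) := by
        apply Finite.of_surjective (G.deleteEdges M).connectedComponentMk
        intro c
        exact c.exists_rep
      have hnon : Nonempty ((G.deleteEdges M).ConnectedComponent) :=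
        ⟨(G.deleteEdges M).connectedComponentMk (Classical.arbitrary V)⟩
      exact Nat.card_pos
    rw [ALG]
    omega
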